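/- Let F : ℂ → ℂ be holomorphic near ξ₀ and (z,t) ∈ ℂ×ℝ. Define G(ξ) = F(ξ) − ½(z − 2tξ − z̄ξ²). Then G(ξ₀) = 0 and G'(ξ₀) = 0 hold for some (z,t) ∈ ℂ×ℝ if and only if Im[(1+ξξ̄)² ∂(F/(1+ξξ̄)²)]|_{ξ₀} = 0 (the point (ξ₀, F(ξ₀)) is Lagrangian), where ∂ is the Wirtinger derivative in ξ. -/

import Mathlib

open Complex ComplexConjugate

/-- Wirtinger derivative ∂/∂ξ of a function ℂ → ℂ. -/
noncomputable def wd (f : ℂ → ℂ) (ν : ℂ) : ℂ :=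
  (fderiv ℝ f ν 1 - Complex.I * fderiv ℝ f ν Complex.I) / 2

lemma wd_mul {u v : ℂ → ℂ} {ν : ℂ} (hu : DifferentiableAt ℝ u ν)
    (hv : DifferentiableAt ℝ v ν) :
    wd (fun ξ => u ξ * v ξ) ν = wd u ν * v ν + u ν * wd v ν := by
  unfold wd
  rw [fderiv_fun_mul hu hv]
  simp only [ContinuousLinearMap.add_apply, ContinuousLinearMap.smul_apply, smul_eq_mul]
  ring

lemma wd_add {u v : ℂ → ℂ} {ν : ℂ} (hu : DifferentiableAt ℝ u ν)
    (hv : DifferentiableAt ℝ v ν) :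
    wd (fun ξ => u ξ + v ξ) ν = wd u ν + wd v ν := by
  unfold wd
  rw [fderiv_fun_add hu hv]
  simp only [ContinuousLinearMap.add_apply]
  ring

lemma wd_const (c : ℂ) (ν : ℂ) : wd (fun _ => c) ν = 0 := by
  unfold wd
  simp

lemma wd_id (ν : ℂ) : wd (fun ξ => ξ) ν = 1 := by
  unfold wd
  rw [fderiv_id']
  simp [Complex.ext_iff]

lemma wd_conj (ν : ℂ) : wd (fun ξ => (conj ξ : ℂ)) ν = 0 := by
  unfold wd
  have h : (fun ξ : ℂ => (conj ξ : ℂ)) = ⇑Complex.conjCLE := by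
    funext ξ; simp [Complex.conjCLE_apply]
  rw [h, ContinuousLinearEquiv.fderiv]
  simp [Complex.conjCLE_apply, Complex.ext_iff]

lemma wd_inv {q : ℂ → ℂ} {ν : ℂ} (hq : DifferentiableAt ℝ q ν) (h0 : q ν ≠ 0) :
    wd (fun ξ => (q ξ)⁻¹) ν = -(wd q ν) / (q ν)^2 := by
  unfold wd
  have hcomp : fderiv ℝ (fun ξ => (q ξ)⁻¹) ν
      = (fderiv ℝ Inv.inv (q ν)).comp (fderiv ℝ q ν) :=
    fderiv_comp ν (differentiableAt_inv h0) hq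
  rw [hcomp, fderiv_inv' h0]
  simp only [ContinuousLinearMap.comp_apply, ContinuousLinearMap.neg_apply,
    ContinuousLinearMap.mulLeftRight_apply]
  field_simp
  ring

lemma wd_holo {F : ℂ → ℂ} {ν : ℂ} (h : DifferentiableAt ℂ F ν) :
    wd F ν = deriv F ν := by
  unfold wd
  rw [(h.hasFDerivAt.restrictScalars ℝ).fderiv]
  simp only [ContinuousLinearMap.coe_restrictScalars']
  have h1 : fderiv ℂ F ν 1 = deriv F ν := by
    rw [← toSpanSingleton_deriv]
    simp
  have hI : fderiv ℂ F ν Complex.I = Complex.I * deriv F ν := by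
    have h2 : fderiv ℂ F ν (Complex.I • (1 : ℂ)) = Complex.I • (fderiv ℂ F ν 1) :=
      ContinuousLinearMap.map_smul _ _ _
    simpa [h1, smul_eq_mul] using h2
  rw [h1, hI]
  have : Complex.I * (Complex.I * deriv F ν) = -deriv F ν := by
    rw [← mul_assoc, Complex.I_mul_I]; ring
  rw [this]
  ring

/-- Let F be holomorphic near ξ₀ and G(ξ) = F(ξ) − ½(z − 2tξ − z̄ξ²).
Then G(ξ₀) = 0 and G'(ξ₀) = 0 hold for some (z,t) ∈ ℂ × ℝ iff
Im[(1+ξξ̄)²·∂(F/(1+ξξ̄)²)] vanishes at ξ₀, i.e. the point (ξ₀, F(ξ₀)) is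
Lagrangian. -/
theorem stmt19 (F : ℂ → ℂ) (ξ₀ : ℂ) (V : Set ℂ) (hV : V ∈ nhds ξ₀)
    (hF : DifferentiableOn ℂ F V) :
    (∃ (z : ℂ) (t : ℝ),
        F ξ₀ - (z - 2 * (t : ℂ) * ξ₀ - conj z * ξ₀^2) / 2 = 0 ∧
        deriv (fun ξ => F ξ - (z - 2 * (t : ℂ) * ξ - conj z * ξ^2) / 2) ξ₀ = 0) ↔
      ((1 + ξ₀ * conj ξ₀)^2 * wd (fun ξ => F ξ / (1 + ξ * conj ξ)^2) ξ₀).im = 0 := by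
  have hFa : DifferentiableAt ℂ F ξ₀ := hF.differentiableAt hV
  have hFR : DifferentiableAt ℝ F ξ₀ := hFa.restrictScalars ℝ
  set a : ℂ := F ξ₀ with ha
  set b : ℂ := deriv F ξ₀ with hb
  set d : ℂ := 1 + ξ₀ * conj ξ₀ with hd
  -- d is a positive real
  have hdre : d = ((1 + Complex.normSq ξ₀ : ℝ) : ℂ) := by
    rw [hd, Complex.mul_conj]; push_cast; ring
  have hdpos : (0 : ℝ) < 1 + Complex.normSq ξ₀ := by
    have := Complex.normSq_nonneg ξ₀; linarith
  have hd0 : d ≠ 0 := by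
    rw [hdre]
    exact_mod_cast ne_of_gt hdpos
  have hd20 : d ^ 2 ≠ 0 := pow_ne_zero 2 hd0
  -- differentiability of the pieces
  have hconjd : DifferentiableAt ℝ (fun ξ : ℂ => (conj ξ : ℂ)) ξ₀ := by
    have h : (fun ξ : ℂ => (conj ξ : ℂ)) = ⇑Complex.conjCLE := by
      funext ξ; simp [Complex.conjCLE_apply]
    rw [h]; exact Complex.conjCLE.differentiableAt
  have hud : DifferentiableAt ℝ (fun ξ : ℂ => 1 + ξ * conj ξ) ξ₀ :=
    (differentiableAt_const 1).add (differentiableAt_fun_id.mul hconjd)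
  have hqd : DifferentiableAt ℝ (fun ξ : ℂ => (1 + ξ * conj ξ)^2) ξ₀ := hud.pow 2
  have hq0 : (1 + ξ₀ * conj ξ₀)^2 ≠ 0 := hd20
  -- Wirtinger derivative of the quadratic factor
  have hwdu : wd (fun ξ : ℂ => 1 + ξ * conj ξ) ξ₀ = conj ξ₀ := by
    have := wd_add (u := fun _ : ℂ => (1:ℂ)) (v := fun ξ : ℂ => ξ * conj ξ)
      (ν := ξ₀) (differentiableAt_const 1) (differentiableAt_fun_id.mul hconjd)
    rw [this, wd_const]
    have := wd_mul (u := fun ξ : ℂ => ξ) (v := fun ξ : ℂ => (conj ξ : ℂ))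
      (ν := ξ₀) differentiableAt_fun_id hconjd
    rw [this, wd_id, wd_conj]
    ring
  have hwdq : wd (fun ξ : ℂ => (1 + ξ * conj ξ)^2) ξ₀ = 2 * d * conj ξ₀ := by
    have heq : (fun ξ : ℂ => (1 + ξ * conj ξ)^2)
        = fun ξ : ℂ => (1 + ξ * conj ξ) * (1 + ξ * conj ξ) := by
      funext ξ; ring
    rw [heq, wd_mul hud hud, hwdu, ← hd]
    ring
  -- Wirtinger derivative of f
  have hwdf : wd (fun ξ => F ξ / (1 + ξ * conj ξ)^2) ξ₀
      = b * (d^2)⁻¹ + a * (-(2 * d * conj ξ₀) / (d^2)^2) := by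
    have heq : (fun ξ => F ξ / (1 + ξ * conj ξ)^2)
        = fun ξ => F ξ * ((1 + ξ * conj ξ)^2)⁻¹ := by
      funext ξ; rw [div_eq_mul_inv]
    rw [heq, wd_mul (v := fun ξ => ((1 + ξ * conj ξ)^2)⁻¹) hFR (hqd.inv hq0), wd_holo hFa, wd_inv hqd hq0, hwdq, ← hd, ← ha, ← hb]
  -- the key quantity
  set s : ℂ := d * b - 2 * conj ξ₀ * a with hs
  have hmain : ((1 + ξ₀ * conj ξ₀)^2 * wd (fun ξ => F ξ / (1 + ξ * conj ξ)^2) ξ₀)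
      = s / d := by
    rw [hwdf, ← hd, hs]
    field_simp
    ring
  have hiff : ((1 + ξ₀ * conj ξ₀)^2 * wd (fun ξ => F ξ / (1 + ξ * conj ξ)^2) ξ₀).im = 0
      ↔ s.im = 0 := by
    rw [hmain, hdre, Complex.div_ofReal_im, div_eq_zero_iff]
    constructor
    · rintro (h | h)
      · exact h
      · exact absurd h (ne_of_gt hdpos)
    · intro h; exact Or.inl h
  rw [hiff]
  clear_value a b d s
  -- derivative computation for arbitrary z, t
  have hderiv : ∀ (z : ℂ) (t : ℝ),
      deriv (fun ξ => F ξ - (z - 2 * (t : ℂ) * ξ - conj z * ξ^2) / 2) ξ₀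
        = b + (t : ℂ) + conj z * ξ₀ := by
    intro z t
    have h1 : HasDerivAt (fun ξ : ℂ => (z - 2 * (t : ℂ) * ξ - conj z * ξ^2) / 2)
        ((0 - 2 * (t : ℂ) * 1 - conj z * (2 * ξ₀ ^ 1)) / 2) ξ₀ := by
      apply HasDerivAt.div_const
      exact ((hasDerivAt_const ξ₀ z).sub ((hasDerivAt_id' ξ₀).const_mul (2 * (t : ℂ)))).sub
        ((hasDerivAt_pow 2 ξ₀).const_mul (conj z))
    have h2 := (hFa.hasDerivAt.fun_sub h1).deriv
    rw [h2, ← hb]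
    ring
  constructor
  · rintro ⟨z, t, h1, h2⟩
    rw [hderiv z t] at h2
    have hbz : b = -(t : ℂ) - conj z * ξ₀ := by linear_combination h2
    have haz : 2 * a = z - 2 * (t : ℂ) * ξ₀ - conj z * ξ₀^2 := by linear_combination 2 * h1
    have hsval : s = -(t : ℂ) + (t : ℂ) * (ξ₀ * conj ξ₀)
        - (conj z * ξ₀ + z * conj ξ₀) := by
      rw [hs, hd, hbz]
      linear_combination (- conj ξ₀) * haz
    rw [hsval]
    simp [Complex.sub_im, Complex.add_im, Complex.mul_im, Complex.mul_re,
      Complex.conj_re, Complex.conj_im, Complex.ofReal_re, Complex.ofReal_im]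
    ring
  · intro him
    subst hd; subst hs
    set c := conj ξ₀ with hc
    have hcs : conj ((1 + ξ₀ * c) * b - 2 * c * a) = (1 + ξ₀ * c) * b - 2 * c * a :=
      Complex.conj_eq_iff_im.mpr him
    have hcd : conj (1 + ξ₀ * c) = 1 + ξ₀ * c := by
      have h1 : conj c = ξ₀ := by rw [hc, Complex.conj_conj]
      simp only [map_add, map_mul, map_one, h1, hc, Complex.conj_conj]
      try ring
    obtain ⟨r₀, hr₀⟩ : ∃ r : ℂ, r = -((1 + ξ₀ * c) * b - 2 * c * a) / (1 + ξ₀ * c) := ⟨_, rfl⟩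
    have hcr : conj r₀ = r₀ := by
      rw [hr₀, map_div₀, map_neg, hcs, hcd]
    have hcc : conj c = ξ₀ := by rw [hc, Complex.conj_conj]
    obtain ⟨T, hT⟩ : ∃ T : ℂ, T =
        (-2 * (a * c + conj a * ξ₀) + (1 - ξ₀^2 * c^2) * r₀) / (1 + ξ₀ * c)^2 := ⟨_, rfl⟩
    have hcT : conj T = T := by
      rw [hT, map_div₀, map_pow, hcd]
      congr 1
      simp only [map_add, map_mul, map_sub, map_neg, map_pow, map_one, map_ofNat,
        Complex.conj_conj, hcr, hcc]
      ring
    obtain ⟨z, hz⟩ : ∃ z : ℂ, z =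
        (2 * (a - conj a * ξ₀^2) + 2 * ξ₀ * (1 + ξ₀ * c) * r₀) / (1 + ξ₀ * c)^2 := ⟨_, rfl⟩
    have hcz : conj z = (2 * (conj a - a * c^2) + 2 * c * (1 + ξ₀ * c) * r₀) / (1 + ξ₀ * c)^2 := by
      rw [hz, map_div₀, map_pow, hcd]
      congr 1
      simp only [map_add, map_mul, map_sub, map_pow, map_ofNat, map_one,
        Complex.conj_conj, hcr, hcc, hcd]
      try ring
    have hd0' : (1 + ξ₀ * c) ≠ 0 := by rwa [hc]
    have hbd : b * (1 + ξ₀ * c) = 2 * c * a - r₀ * (1 + ξ₀ * c) := by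
      have hrr : r₀ * (1 + ξ₀ * c) = -((1 + ξ₀ * c) * b - 2 * c * a) := by
        rw [hr₀]; field_simp
      rw [hrr]; ring
    have hTre : ((T.re : ℝ) : ℂ) = T := Complex.conj_eq_iff_re.mp hcT
    refine ⟨z, T.re, ?_, ?_⟩
    · rw [hTre, hcz, hz, hT]
      field_simp
      ring
    · rw [hderiv z T.re, hTre, hcz, hT]
      have hd0'' : 1 + c * ξ₀ ≠ 0 := by rwa [mul_comm c ξ₀]
      field_simp
      linear_combination (1 + ξ₀ * c) * hbd
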